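/- Suppose L ⊂ ℂ is a continuously differentiable (C¹) simple arc, and suppose there exist contracting similitudes g_n(z) = γ_n z + b_n with ratios |γ_n| → 0 such that g_n(L) ⊆ L for all n, and L contains three non-collinear points. Then a contradiction follows; hence if a C¹ arc is invariant under arbitrarily strong contracting similitudes mapping it into itself, it must be contained in a straight line. -/

import Mathlib

open Filter

lemma im_ne_zero_of_not_collinear {p q r : ℂ}
    (h : ¬ Collinear ℝ ({p, q, r} : Set ℂ)) :
    ((q - p) * (starRingEnd ℂ) (r - p)).im ≠ 0 := by
  intro h0
  apply h
  by_cases hw : r - p = 0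
  · have hr : r = p := by rwa [sub_eq_zero] at hw
    refine (collinear_pair ℝ p q).subset ?_
    intro x hx
    rcases hx with rfl | rfl | rfl <;> simp [hr]
  · rw [collinear_iff_exists_forall_eq_smul_vadd]
    refine ⟨p, r - p, ?_⟩
    intro x hx
    rcases hx with rfl | rfl | rfl
    · exact ⟨0, by simp⟩
    · refine ⟨((x - p) * (starRingEnd ℂ) (r - p)).re / Complex.normSq (r - p), ?_⟩
      have key : (x - p) * (starRingEnd ℂ) (r - p)
          = (((x - p) * (starRingEnd ℂ) (r - p)).re : ℂ) := by
        apply Complex.ext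
        · simp
        · simpa using h0
      have hns : (Complex.normSq (r - p) : ℂ) ≠ 0 := by
        simpa [Complex.normSq_eq_zero] using hw
      have hmc : ((Complex.normSq (r - p) : ℂ)) = (starRingEnd ℂ) (r - p) * (r - p) := by
        rw [mul_comm]; exact (Complex.mul_conj _).symm
      have heq : (x - p) * (Complex.normSq (r - p) : ℂ)
          = (((x - p) * (starRingEnd ℂ) (r - p)).re : ℂ) * (r - p) := by
        conv_lhs => rw [hmc, ← mul_assoc, key]
      have hxp : x - p = ((((x - p) * (starRingEnd ℂ) (r - p)).re : ℂ)
          / (Complex.normSq (r - p) : ℂ)) * (r - p) := by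
        rw [div_mul_eq_mul_div, eq_div_iff hns]
        exact heq
      rw [Complex.real_smul, vadd_eq_add]
      push_cast
      linear_combination hxp
    · exact ⟨1, by simp⟩

set_option maxHeartbeats 4000000 in

theorem arc_invariant_under_strong_contractions_is_line
    (φ : ℝ → ℂ) (φ' : ℝ → ℂ)
    (hderiv : ∀ t ∈ Set.Icc (0 : ℝ) 1, HasDerivAt φ (φ' t) t)
    (hφ'cont : ContinuousOn φ' (Set.Icc (0 : ℝ) 1))
    (hreg : ∀ t ∈ Set.Icc (0 : ℝ) 1, φ' t ≠ 0)
    (hinj : Set.InjOn φ (Set.Icc (0 : ℝ) 1))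
    (L : Set ℂ) (hL : L = φ '' Set.Icc (0 : ℝ) 1)
    (γ b : ℕ → ℂ) (hγ0 : ∀ n, γ n ≠ 0)
    (hγlim : Tendsto (fun n => ‖γ n‖) atTop (nhds 0))
    (hinv : ∀ n, (fun z => γ n * z + b n) '' L ⊆ L)
    (hnoncol : ∃ p ∈ L, ∃ q ∈ L, ∃ r ∈ L, ¬ Collinear ℝ {p, q, r}) :
    False := by
  obtain ⟨p, hp, q, hq, r, hr, hncol⟩ := hnoncol
  have him : ((q - p) * (starRingEnd ℂ) (r - p)).im ≠ 0 :=
    im_ne_zero_of_not_collinear hncol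
  have hz : q - p ≠ 0 := by intro h; rw [h] at him; simp at him
  have hw : r - p ≠ 0 := by intro h; rw [h] at him; simp at him
  set c0 := |((q - p) * (starRingEnd ℂ) (r - p)).im| with hc0def
  have hc0 : 0 < c0 := abs_pos.mpr him
  set M := ‖q - p‖ * ‖r - p‖ with hMdef
  have hM : 0 < M := mul_pos (norm_pos_iff.mpr hz) (norm_pos_iff.mpr hw)
  -- parametrize images of p, q, r
  have hmem : ∀ n, ∀ x ∈ L, γ n * x + b n ∈ L := fun n x hx => hinv n ⟨x, hx, rfl⟩
  have hex : ∀ (x : ℂ), x ∈ L → ∀ n, ∃ y ∈ Set.Icc (0:ℝ) 1, φ y = γ n * x + b n := by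
    intro x hx n
    have h1 := hmem n x hx
    rw [hL] at h1
    obtain ⟨y, hy, hyy⟩ := h1
    exact ⟨y, hy, hyy⟩
  choose t htm htv using hex p hp
  choose s hsm hsv using hex q hq
  choose u hum huv using hex r hr
  -- ultrafilter limits
  let U : Ultrafilter ℕ := Ultrafilter.of atTop
  have hU : (U : Filter ℕ) ≤ atTop := Ultrafilter.of_le _
  have hlimget : ∀ (v : ℕ → ℝ), (∀ n, v n ∈ Set.Icc (0:ℝ) 1) →
      ∃ x ∈ Set.Icc (0:ℝ) 1, Tendsto v (U : Filter ℕ) (nhds x) := by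
    intro v hv
    obtain ⟨x, hx, hle⟩ := isCompact_Icc.ultrafilter_le_nhds (U.map v)
      (by rw [Ultrafilter.coe_map, le_principal_iff, Filter.mem_map]; exact Filter.univ_mem' hv)
    exact ⟨x, hx, by rwa [Ultrafilter.coe_map] at hle⟩
  obtain ⟨t₀, ht₀, htlim⟩ := hlimget t htm
  obtain ⟨s₀, hs₀, hslim⟩ := hlimget s hsm
  obtain ⟨u₀, hu₀, hulim⟩ := hlimget u hum
  have hγ0lim : Tendsto γ atTop (nhds 0) := by
    rw [tendsto_zero_iff_norm_tendsto_zero]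
    simpa using hγlim
  have hcont : ∀ x ∈ Set.Icc (0:ℝ) 1, ContinuousAt φ x := fun x hx => (hderiv x hx).continuousAt
  -- common limit point
  have key_eq : ∀ (v : ℕ → ℝ) (x₀ : ℝ), x₀ ∈ Set.Icc (0:ℝ) 1 →
      Tendsto v (U : Filter ℕ) (nhds x₀) →
      ∀ (x : ℂ), (∀ n, φ (v n) = γ n * x + b n) → φ x₀ = φ t₀ := by
    intro v x₀ hx₀ hvlim x hvx
    have h1 : Tendsto (fun n => φ (v n) - φ (t n)) (U : Filter ℕ) (nhds (φ x₀ - φ t₀)) :=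
      ((hcont x₀ hx₀).tendsto.comp hvlim).sub ((hcont t₀ ht₀).tendsto.comp htlim)
    have h2 : Tendsto (fun n => φ (v n) - φ (t n)) (U : Filter ℕ) (nhds 0) := by
      have heq : (fun n => φ (v n) - φ (t n)) = fun n => γ n * (x - p) := by
        funext n; rw [hvx n, htv n]; ring
      rw [heq]
      have := (hγ0lim.mul_const (x - p)).mono_left hU
      simpa using this
    have h3 := tendsto_nhds_unique h1 h2
    rw [sub_eq_zero] at h3
    exact h3
  have hs₀t₀ : s₀ = t₀ := hinj hs₀ ht₀ (key_eq s s₀ hs₀ hslim q hsv)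
  have hu₀t₀ : u₀ = t₀ := hinj hu₀ ht₀ (key_eq u u₀ hu₀ hulim r huv)
  rw [hs₀t₀] at hslim
  rw [hu₀t₀] at hulim
  -- derivative at the limit point
  have hD : φ' t₀ ≠ 0 := hreg t₀ ht₀
  have hDpos : 0 < ‖φ' t₀‖ := norm_pos_iff.mpr hD
  set D := φ' t₀ with hDdef
  set ε := min (‖D‖/2) (c0 * ‖D‖ / (16 * M)) with hεdef
  have hε : 0 < ε := lt_min (by positivity) (by positivity)
  have hε1 : ε ≤ ‖D‖/2 := min_le_left _ _
  have hε2 : ε ≤ c0 * ‖D‖ / (16 * M) := min_le_right _ _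
  obtain ⟨δ, hδ, hball⟩ := Metric.continuousWithinAt_iff.mp (hφ'cont t₀ ht₀) ε hε
  set S := Set.Icc (0:ℝ) 1 ∩ Metric.ball t₀ δ with hSdef
  have hSconv : Convex ℝ S := (convex_Icc 0 1).inter (convex_ball t₀ δ)
  have hbound : ∀ x ∈ S, ‖φ' x - D‖ ≤ ε := by
    intro x hx
    have h1 := hball hx.1 (Metric.mem_ball.mp hx.2)
    rw [dist_eq_norm] at h1
    exact h1.le
  have hfd : ∀ x ∈ S, HasDerivWithinAt (fun y => φ y - y • D) (φ' x - D) S x := by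
    intro x hx
    have h1 := (hderiv x hx.1).hasDerivWithinAt (s := S)
    have h2 : HasDerivWithinAt (fun y : ℝ => y • D) ((1:ℝ) • D) S x :=
      (hasDerivWithinAt_id x S).smul_const D
    have h3 := h1.sub h2; rw [one_smul] at h3; exact h3
  have hMVT : ∀ x ∈ S, ∀ y ∈ S,
      ‖(φ y - y • D) - (φ x - x • D)‖ ≤ ε * ‖y - x‖ := fun x hx y hy =>
    hSconv.norm_image_sub_le_of_norm_hasDerivWithin_le hfd hbound hx hy
  -- pick a single good index n
  have hevt : ∀ᶠ n in (U : Filter ℕ), dist (t n) t₀ < δ :=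
    (Metric.tendsto_nhds.mp htlim) δ hδ
  have hevs : ∀ᶠ n in (U : Filter ℕ), dist (s n) t₀ < δ :=
    (Metric.tendsto_nhds.mp hslim) δ hδ
  have hevu : ∀ᶠ n in (U : Filter ℕ), dist (u n) t₀ < δ :=
    (Metric.tendsto_nhds.mp hulim) δ hδ
  obtain ⟨n, hnt, hns, hnu⟩ := (hevt.and (hevs.and hevu)).exists
  have htS : t n ∈ S := ⟨htm n, Metric.mem_ball.mpr hnt⟩
  have hsS : s n ∈ S := ⟨hsm n, Metric.mem_ball.mpr hns⟩
  have huS : u n ∈ S := ⟨hum n, Metric.mem_ball.mpr hnu⟩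
  have h1 := hMVT (t n) htS (s n) hsS
  have h2 := hMVT (t n) htS (u n) huS
  set σ := s n - t n with hσdef
  set τ := u n - t n with hτdef
  have he1 : ‖(φ (s n) - φ (t n)) - σ • D‖ ≤ ε * |σ| := by
    have heq : (φ (s n) - (s n) • D) - (φ (t n) - (t n) • D)
        = (φ (s n) - φ (t n)) - σ • D := by
      rw [hσdef, sub_smul]; abel
    rw [heq] at h1
    simpa [Real.norm_eq_abs] using h1
  have he2 : ‖(φ (u n) - φ (t n)) - τ • D‖ ≤ ε * |τ| := by
    have heq : (φ (u n) - (u n) • D) - (φ (t n) - (t n) • D)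
        = (φ (u n) - φ (t n)) - τ • D := by
      rw [hτdef, sub_smul]; abel
    rw [heq] at h2
    simpa [Real.norm_eq_abs] using h2
  have hzn : φ (s n) - φ (t n) = γ n * (q - p) := by rw [hsv n, htv n]; ring
  have hwn : φ (u n) - φ (t n) = γ n * (r - p) := by rw [huv n, htv n]; ring
  have hσ0 : σ ≠ 0 := by
    intro h
    apply mul_ne_zero (hγ0 n) hz
    have hst : s n = t n := by rw [sub_eq_zero] at h; exact h
    rw [← hzn, hst, sub_self]
  have hτ0 : τ ≠ 0 := by
    intro h
    apply mul_ne_zero (hγ0 n) hw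
    have hst : u n = t n := by rw [sub_eq_zero] at h; exact h
    rw [← hwn, hst, sub_self]
  have hσpos : 0 < |σ| := abs_pos.mpr hσ0
  have hτpos : 0 < |τ| := abs_pos.mpr hτ0
  set A := (σ:ℂ) * D with hAdef
  set B := (τ:ℂ) * D with hBdef
  set E1 := (φ (s n) - φ (t n)) - A with hE1def
  set E2 := (φ (u n) - φ (t n)) - B with hE2def
  have hE1 : ‖E1‖ ≤ ε * |σ| := by rw [hE1def, hAdef, ← Complex.real_smul]; exact he1
  have hE2 : ‖E2‖ ≤ ε * |τ| := by rw [hE2def, hBdef, ← Complex.real_smul]; exact he2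
  have hE1nn : 0 ≤ ‖E1‖ := norm_nonneg _
  have hE2nn : 0 ≤ ‖E2‖ := norm_nonneg _
  have hAn : ‖A‖ = |σ| * ‖D‖ := by
    rw [hAdef, norm_mul, Complex.norm_real, Real.norm_eq_abs]
  have hBn : ‖B‖ = |τ| * ‖D‖ := by
    rw [hBdef, norm_mul, Complex.norm_real, Real.norm_eq_abs]
  have hzA : γ n * (q - p) = A + E1 := by rw [hE1def, hzn]; ring
  have hwB : γ n * (r - p) = B + E2 := by rw [hE2def, hwn]; ring
  set R := A * (starRingEnd ℂ) E2 + E1 * (starRingEnd ℂ) B + E1 * (starRingEnd ℂ) E2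
    with hRdef
  have hsplit : (γ n * (q - p)) * (starRingEnd ℂ) (γ n * (r - p))
      = A * (starRingEnd ℂ) B + R := by
    rw [hzA, hwB, map_add, hRdef]; ring
  have himAB : (A * (starRingEnd ℂ) B).im = 0 := by
    have heq : A * (starRingEnd ℂ) B = ((σ * τ * Complex.normSq D : ℝ) : ℂ) := by
      rw [hAdef, hBdef, map_mul, Complex.conj_ofReal]
      push_cast
      rw [← Complex.mul_conj]
      ring
    rw [heq, Complex.ofReal_im]
  have himγ : ((γ n * (q - p)) * (starRingEnd ℂ) (γ n * (r - p))).im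
      = Complex.normSq (γ n) * ((q - p) * (starRingEnd ℂ) (r - p)).im := by
    have heq : (γ n * (q - p)) * (starRingEnd ℂ) (γ n * (r - p))
        = ((Complex.normSq (γ n) : ℝ) : ℂ) * ((q - p) * (starRingEnd ℂ) (r - p)) := by
      rw [map_mul, ← Complex.mul_conj]; ring
    rw [heq]
    simp [Complex.mul_im]
  have hRnorm : ‖R‖ ≤ ‖A‖ * ‖E2‖ + ‖E1‖ * ‖B‖ + ‖E1‖ * ‖E2‖ := by
    refine le_trans (norm_add₃_le) ?_
    have c1 : ‖A * (starRingEnd ℂ) E2‖ = ‖A‖ * ‖E2‖ := by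
      rw [norm_mul, Complex.norm_conj]
    have c2 : ‖E1 * (starRingEnd ℂ) B‖ = ‖E1‖ * ‖B‖ := by
      rw [norm_mul, Complex.norm_conj]
    have c3 : ‖E1 * (starRingEnd ℂ) E2‖ = ‖E1‖ * ‖E2‖ := by
      rw [norm_mul, Complex.norm_conj]
    rw [c1, c2, c3]
  have hub : Complex.normSq (γ n) * c0 ≤ 3 * ‖D‖ * ε * (|σ| * |τ|) := by
    have h3 : Complex.normSq (γ n) * c0
        = |((γ n * (q - p)) * (starRingEnd ℂ) (γ n * (r - p))).im| := by
      rw [himγ, abs_mul, abs_of_nonneg (Complex.normSq_nonneg _), hc0def]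
    calc Complex.normSq (γ n) * c0
        = |(A * (starRingEnd ℂ) B + R).im| := by rw [h3, hsplit]
      _ = |R.im| := by rw [Complex.add_im, himAB, zero_add]
      _ ≤ ‖R‖ := Complex.abs_im_le_norm R
      _ ≤ ‖A‖ * ‖E2‖ + ‖E1‖ * ‖B‖ + ‖E1‖ * ‖E2‖ := by
          exact hRnorm
      _ ≤ 3 * ‖D‖ * ε * (|σ| * |τ|) := by
          rw [hAn, hBn]
          have t1 := mul_le_mul_of_nonneg_left hE2
            (mul_nonneg (abs_nonneg σ) (norm_nonneg D))
          have t2 := mul_le_mul_of_nonneg_right hE1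
            (mul_nonneg (abs_nonneg τ) (norm_nonneg D))
          have t3 : ‖E1‖ * ‖E2‖ ≤ (ε * |σ|) * (ε * |τ|) :=
            mul_le_mul hE1 hE2 hE2nn (by positivity)
          have t4 : ε * (ε * (|σ| * |τ|)) ≤ (‖D‖ / 2) * (ε * (|σ| * |τ|)) :=
            mul_le_mul_of_nonneg_right hε1 (by positivity)
          nlinarith [t1, t2, t3, t4, hε, hσpos, hτpos, hDpos]
  have hlbz : (‖D‖ - ε) * |σ| ≤ ‖A + E1‖ := by
    have hns := norm_sub_norm_le A (-E1)
    rw [sub_neg_eq_add, norm_neg] at hns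
    calc (‖D‖ - ε) * |σ| = ‖A‖ - ε * |σ| := by rw [hAn]; ring
      _ ≤ ‖A‖ - ‖E1‖ := by linarith
      _ ≤ ‖A + E1‖ := hns
  have hlbw : (‖D‖ - ε) * |τ| ≤ ‖B + E2‖ := by
    have hns := norm_sub_norm_le B (-E2)
    rw [sub_neg_eq_add, norm_neg] at hns
    calc (‖D‖ - ε) * |τ| = ‖B‖ - ε * |τ| := by rw [hBn]; ring
      _ ≤ ‖B‖ - ‖E2‖ := by linarith
      _ ≤ ‖B + E2‖ := hns
  have hABnorm : ‖A + E1‖ * ‖B + E2‖ = Complex.normSq (γ n) * M := by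
    rw [← hzA, ← hwB, norm_mul, norm_mul, hMdef,
      ← Complex.sq_norm]
    ring
  have hprod : (‖D‖ / 2) * (‖D‖ / 2) * (|σ| * |τ|) ≤ Complex.normSq (γ n) * M := by
    rw [← hABnorm]
    have h5 : ‖D‖ / 2 ≤ ‖D‖ - ε := by linarith
    have l1 : (‖D‖ / 2) * |σ| ≤ ‖A + E1‖ := le_trans (by nlinarith) hlbz
    have l2 : (‖D‖ / 2) * |τ| ≤ ‖B + E2‖ := le_trans (by nlinarith) hlbw
    have := mul_le_mul l1 l2 (by positivity) (norm_nonneg _)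
    nlinarith [this]
  -- final contradiction
  have hγpos : 0 < Complex.normSq (γ n) := Complex.normSq_pos.mpr (hγ0 n)
  have hstpos : 0 < |σ| * |τ| := mul_pos hσpos hτpos
  have h16 : 16 * M * ε ≤ c0 * ‖D‖ := by
    rw [le_div_iff₀ (by positivity : (0:ℝ) < 16 * M)] at hε2
    linarith [hε2]
  have a1 : 16 * M * (Complex.normSq (γ n) * c0)
      ≤ 16 * M * (3 * ‖D‖ * ε * (|σ| * |τ|)) :=
    mul_le_mul_of_nonneg_left hub (by positivity)
  have a2 : (3 * ‖D‖ * (|σ| * |τ|)) * (16 * M * ε)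
      ≤ (3 * ‖D‖ * (|σ| * |τ|)) * (c0 * ‖D‖) :=
    mul_le_mul_of_nonneg_left h16 (by positivity)
  have a3 : (4 * c0) * ((‖D‖ / 2) * (‖D‖ / 2) * (|σ| * |τ|))
      ≤ (4 * c0) * (Complex.normSq (γ n) * M) :=
    mul_le_mul_of_nonneg_left hprod (by positivity)
  have hX : 0 < M * (Complex.normSq (γ n) * c0) := by positivity
  nlinarith [a1, a2, a3, hX]
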